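/- arXiv:2505.15432 — 2 statements merged into one kernel-verified Lean document; each statement's English description precedes it below -/
import Mathlib

section
/- Let ℓ = ℓ1 ℓ2 be a factorization of a Lyndon word ℓ with ℓ1 and ℓ2 both Lyndon. Define s_0 = ℓ2, p_0 = ℓ1, and, as long as |p_i| > 1, s_{i+1} = p_i^r s_i and p_{i+1} = p_i^l (costandard factorizations). Let j be the index with s_j = ℓ^r, the longest proper Lyndon suffix of ℓ. Then every s_i with 0 ≤ i ≤ j is a Lyndon word. -/
/- Words over a linearly ordered alphabet `I` are lists, compared by the
lexicographic order of Lean's `LinearOrder (List I)` instance, in which a word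
is smaller than any word of which it is a proper prefix. -/

variable {I : Type*} [LinearOrder I]

/-- A nonempty word is *Lyndon* if it is lexicographically smaller than
every proper nonempty suffix of itself. -/
def IsLyndon (w : List I) : Prop :=
  w ≠ [] ∧ ∀ i, 0 < i → i < w.length → w < w.drop i

/-- `r` is the longest proper suffix of `l` that is Lyndon
(the right factor `l^r` of the costandard factorization). -/
def LongestLyndonSuffix (l r : List I) : Prop :=
  r <:+ l ∧ r.length < l.length ∧ IsLyndon r ∧
    ∀ r', r' <:+ l → r'.length < l.length → IsLyndon r' → r'.length ≤ r.length

/-- `p` is the longest proper prefix of `l` that is Lyndon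
(the left factor `l^{ls}` of the standard factorization). -/
def LongestLyndonPrefix (l p : List I) : Prop :=
  p <+: l ∧ p.length < l.length ∧ IsLyndon p ∧
    ∀ p', p' <+: l → p'.length < l.length → IsLyndon p' → p'.length ≤ p.length

/-- `fs` is the canonical factorization of `w`: a nonempty, lexicographically
nonincreasing list of Lyndon words whose concatenation is `w`. -/
def IsCanonicalFactorization (w : List I) (fs : List (List I)) : Prop :=
  w = fs.flatten ∧ fs ≠ [] ∧ (∀ f ∈ fs, IsLyndon f) ∧ fs.Chain' (· ≥ ·)
private lemma lt_of_mid {a b : I} (hab : a < b) : ∀ (w u v : List I), w ++ a :: u < w ++ b :: v := by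
  intro w
  induction w with
  | nil => intro u v; exact List.Lex.rel hab
  | cons c w ih => intro u v; exact List.Lex.cons (ih u v)

private lemma lt_append_self : ∀ (u : List I) {v : List I}, v ≠ [] → u < u ++ v := by
  intro u
  induction u with
  | nil =>
    intro v hv
    cases v with
    | nil => exact absurd rfl hv
    | cons b bs => exact List.Lex.nil
  | cons a u ih => intro v hv; exact List.Lex.cons (ih hv)

private lemma append_lt_append_left {v v' : List I} (h : v < v') : ∀ u : List I, u ++ v < u ++ v' := by
  intro u
  induction u with
  | nil => exact h
  | cons a u ih => exact List.Lex.cons ih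

private lemma lt_decomp {u v : List I} (h : u < v) :
    u <+: v ∨ ∃ (w u' v' : List I) (a b : I), u = w ++ a :: u' ∧ v = w ++ b :: v' ∧ a < b := by
  have h' : List.Lex (· < ·) u v := h
  clear h
  induction h' with
  | nil => exact Or.inl List.nil_prefix
  | @rel a l₁ b l₂ hab => exact Or.inr ⟨[], l₁, l₂, a, b, rfl, rfl, hab⟩
  | @cons a l₁ l₂ h ih =>
    rcases ih with ⟨t, ht⟩ | ⟨w, u', v', x, y, hu, hv, hxy⟩
    · exact Or.inl ⟨t, by rw [List.cons_append, ht]⟩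
    · exact Or.inr ⟨a :: w, u', v', x, y, by rw [hu]; rfl, by rw [hv]; rfl, hxy⟩

private lemma isLyndon_append {u v : List I} (hu : IsLyndon u) (hv : IsLyndon v) (huv : u < v) :
    IsLyndon (u ++ v) := by
  have hune : u ≠ [] := hu.1
  have hvne : v ≠ [] := hv.1
  have hupos : 0 < u.length := List.length_pos_iff.mpr hune
  have hvpos : 0 < v.length := List.length_pos_iff.mpr hvne
  have hkey : u ++ v < v := by
    rcases lt_decomp huv with ⟨t, ht⟩ | ⟨w, u', v', a, b, h1, h2, hab⟩
    · have htne : t ≠ [] := by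
        rintro rfl
        rw [List.append_nil] at ht
        exact absurd ht (ne_of_lt huv)
      have hlt' : v < t := by
        have h3 : v.drop u.length = t := by rw [← ht, List.drop_left]
        have h4 : u.length < v.length := by
          rw [← ht, List.length_append]
          have := List.length_pos_iff.mpr htne
          omega
        have := hv.2 u.length hupos h4
        rwa [h3] at this
      calc u ++ v < u ++ t := append_lt_append_left hlt' u
        _ = v := ht
    · have l1 : u ++ v = w ++ a :: (u' ++ v) := by rw [h1]; simp
      rw [l1]
      conv_rhs => rw [h2]
      exact lt_of_mid hab _ _ _
  refine ⟨by simp [hune], ?_⟩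
  intro i hi0 hilen
  rcases lt_trichotomy i u.length with hlt | heq | hgt
  · have h2' : u < u.drop i := hu.2 i hi0 hlt
    rcases lt_decomp h2' with hp | ⟨w, u1, v1, a, b, e1, e2, hab⟩
    · exfalso
      have := hp.length_le
      rw [List.length_drop] at this
      omega
    · have hdrop : (u ++ v).drop i = u.drop i ++ v := by
        rw [List.drop_append]
        have h0 : i - u.length = 0 := by omega
        rw [h0, List.drop_zero]
      rw [hdrop]
      have l1 : u ++ v = w ++ a :: (u1 ++ v) := by rw [e1]; simp
      have l2 : u.drop i ++ v = w ++ b :: (v1 ++ v) := by rw [e2]; simp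
      rw [l1, l2]
      exact lt_of_mid hab _ _ _
  · subst heq
    rw [List.drop_left]
    exact hkey
  · have hdrop : (u ++ v).drop i = v.drop (i - u.length) := by
      rw [List.drop_append]
      rw [List.drop_eq_nil_of_le (le_of_lt hgt), List.nil_append]
    rw [hdrop]
    have hvd : v < v.drop (i - u.length) := by
      apply hv.2
      · omega
      · rw [List.length_append] at hilen; omega
    exact lt_trans hkey hvd

private lemma suffix_of_suffix_length_le' {t r w : List I} (ht : t <:+ w) (hrw : r <:+ w)
    (hl : t.length ≤ r.length) : t <:+ r := by
  rw [← List.reverse_prefix] at ht hrw ⊢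
  exact List.prefix_of_prefix_length_le ht hrw (by simpa using hl)

private lemma le_min_suffix {w r : List I} (hr : LongestLyndonSuffix w r) :
    ∀ t : List I, t <:+ w → t ≠ [] → t.length < w.length → r ≤ t := by
  suffices H : ∀ N : ℕ, ∀ t : List I, t.length ≤ N → t <:+ w → t ≠ [] → t.length < w.length → r ≤ t by
    exact fun t => H t.length t le_rfl
  intro N
  induction N with
  | zero =>
    intro t hN ht hne _
    exact absurd (List.length_eq_zero_iff.mp (Nat.le_zero.mp hN)) hne
  | succ N ihN =>
    intro t hN hsuf hne hlt
    by_cases hle : t.length ≤ r.length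
    · have htr : t <:+ r := suffix_of_suffix_length_le' hsuf hr.1 hle
      obtain ⟨d, hd⟩ := htr
      by_cases hdne : d = []
      · subst hdne
        rw [List.nil_append] at hd
        exact le_of_eq hd.symm
      · have hdpos : 0 < d.length := List.length_pos_iff.mpr hdne
        have h1 : d.length < r.length := by
          rw [← hd, List.length_append]
          have : 0 < t.length := List.length_pos_iff.mpr hne
          omega
        have h2 := hr.2.2.1.2 d.length hdpos h1
        have hdt : r.drop d.length = t := by rw [← hd]; exact List.drop_left
        rw [hdt] at h2
        exact le_of_lt h2
    · push_neg at hle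
      have htnl : ¬ IsLyndon t := by
        intro hlyn
        exact absurd (hr.2.2.2 t hsuf hlt hlyn) (by omega)
      have htnl' : ∃ i, 0 < i ∧ i < t.length ∧ ¬ t < t.drop i := by
        by_contra hcon
        push_neg at hcon
        exact htnl ⟨hne, fun i h1 h2 => hcon i h1 h2⟩
      obtain ⟨i, hi0, hilen, hnlt⟩ := htnl'
      have hle' : t.drop i ≤ t := le_of_not_gt hnlt
      have h3 := ihN (t.drop i) (by rw [List.length_drop]; omega) ((List.drop_suffix i t).trans hsuf)
        (List.ne_nil_of_length_pos (by rw [List.length_drop]; omega))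
        (by rw [List.length_drop]; omega)
      exact le_trans h3 hle'

private lemma keyA {l p s pr r : List I} (hsplit : l = p ++ s) (hs : s ≠ [])
    (hpr : LongestLyndonSuffix p pr) (hr : LongestLyndonSuffix l r)
    (hlen : pr.length + s.length ≤ r.length) : pr < s := by
  obtain ⟨c0, hc0⟩ := hpr.1
  have hprne : pr ≠ [] := hpr.2.2.1.1
  have hprpos : 0 < pr.length := List.length_pos_iff.mpr hprne
  have hspos : 0 < s.length := List.length_pos_iff.mpr hs
  have hm : pr.length < p.length := hpr.2.1
  set x := pr ++ s with hx
  have hxL : x.length = pr.length + s.length := by rw [hx, List.length_append]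
  have hL : l.length = p.length + s.length := by rw [hsplit, List.length_append]
  have hxsuf : x <:+ l := ⟨c0, by rw [hsplit, ← hc0, List.append_assoc]⟩
  have hxne : x ≠ [] := by
    intro h
    exact hprne (List.append_eq_nil_iff.mp h).1
  have hxlen : x.length < l.length := by omega
  have hslen : s.length < l.length := by omega
  have hssuf : s <:+ l := ⟨p, hsplit.symm⟩
  have hrles : r ≤ s := le_min_suffix hr s hssuf hs hslen
  have hrlex : r ≤ x := le_min_suffix hr x hxsuf hxne hxlen
  obtain ⟨c, hc⟩ := hr.1
  have hrlen : r.length < l.length := hr.2.1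
  have hfin : pr <+: r → pr < s := by
    intro hpf
    have hprr : pr < r := by
      obtain ⟨t, ht⟩ := hpf
      have htne : t ≠ [] := by
        rintro rfl
        rw [List.append_nil] at ht
        rw [ht] at hprpos hlen
        omega
      rw [← ht]
      exact lt_append_self pr htne
    exact lt_of_lt_of_le hprr hrles
  rcases lt_or_eq_of_le hrlex with hlt | heq
  · rcases lt_decomp hlt with hp | ⟨w, r1, x1, a, b, her, hex, hab⟩
    · -- r <+: x forces r = x, contradiction with r < x
      have h1 := hp.length_le
      have h2 : r = x := hp.eq_of_length (by omega)
      rw [h2] at hlt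
      exact absurd hlt (lt_irrefl x)
    · by_cases hm2 : pr.length ≤ w.length
      · apply hfin
        have h1 : pr = x.take pr.length := by rw [hx, List.take_left]
        have h2 : x.take pr.length = w.take pr.length := by
          rw [hex, List.take_append]
          have h0 : pr.length - w.length = 0 := by omega
          rw [h0, List.take_zero, List.append_nil]
        have h3 : pr <+: w := by rw [h1, h2]; exact List.take_prefix _ _
        exact h3.trans ⟨a :: r1, her.symm⟩
      · push_neg at hm2
        exfalso
        have hxltr : x.length < r.length := by
          rcases lt_or_eq_of_le (show x.length ≤ r.length by omega) with h | h
          · exact h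
          · exfalso
            obtain ⟨c0', hc0'⟩ := hxsuf
            have h4 : x = r := (List.append_inj' (hc0'.trans hc.symm) h).2
            rw [h4] at hlt
            exact absurd hlt (lt_irrefl r)
        have hprw : pr = w ++ b :: (x1.take (pr.length - w.length - 1)) := by
          have h1 : pr = x.take pr.length := by rw [hx, List.take_left]
          have h2 : x.take pr.length = w ++ b :: (x1.take (pr.length - w.length - 1)) := by
            rw [hex, List.take_append,
              List.take_of_length_le (le_of_lt hm2),
              show pr.length - w.length = (pr.length - w.length - 1) + 1 from by omega,
              List.take_succ_cons, Nat.add_sub_cancel]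
          exact h1.trans h2
        have hclen : c.length + r.length = l.length := by rw [← hc, List.length_append]
        have hcp : c <+: p := by
          refine List.prefix_of_prefix_length_le ⟨r, hc⟩ ⟨s, hsplit.symm⟩ ?_
          omega
        obtain ⟨p', hp'⟩ := hcp
        have hrp' : r = p' ++ s := by
          have h5 : c ++ r = c ++ (p' ++ s) := by
            rw [hc, hsplit, ← hp', List.append_assoc]
          exact List.append_cancel_left h5
        have hrlen2 : r.length = p'.length + s.length := by rw [hrp', List.length_append]
        have hp'suf : p' <:+ p := ⟨c, hp'⟩
        have hp'ne : p' ≠ [] := List.ne_nil_of_length_pos (by omega)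
        have hp'lt : p'.length < p.length := by
          have h6 : c.length + p'.length = p.length := by rw [← hp', List.length_append]
          omega
        have hprlep' : pr ≤ p' := le_min_suffix hpr p' hp'suf hp'ne hp'lt
        have hp'w : p' = w ++ a :: (r1.take (p'.length - w.length - 1)) := by
          have h1 : p' = r.take p'.length := by rw [hrp', List.take_left]
          have h2 : r.take p'.length = w ++ a :: (r1.take (p'.length - w.length - 1)) := by
            rw [her, List.take_append,
              List.take_of_length_le (show w.length ≤ p'.length from by omega),
              show p'.length - w.length = (p'.length - w.length - 1) + 1 from by omega,
              List.take_succ_cons, Nat.add_sub_cancel]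
          exact h1.trans h2
        have hfinal : p' < pr := by
          rw [hp'w, hprw]
          exact lt_of_mid hab _ _ _
        exact absurd (lt_of_le_of_lt hprlep' hfinal) (lt_irrefl pr)
  · apply hfin
    exact ⟨s, by rw [heq, hx]⟩

/-- For any factorization `ℓ = ℓ1 ℓ2` of a Lyndon word into two Lyndon words, iterating
`s_{i+1} = p_i^r s_i`, `p_{i+1} = p_i^l` (costandard factorizations) from `s_0 = ℓ2`,
`p_0 = ℓ1`, if `s_j = ℓ^r`, then every `s_i` with `0 ≤ i ≤ j` is Lyndon. -/
theorem costandard_seq_lyndon (ℓ ℓ1 ℓ2 : List I)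
    (hℓ : IsLyndon ℓ) (h1 : IsLyndon ℓ1) (h2 : IsLyndon ℓ2) (hsplit : ℓ = ℓ1 ++ ℓ2)
    (s p : ℕ → List I) (hs0 : s 0 = ℓ2) (hp0 : p 0 = ℓ1)
    (hstep : ∀ i, 1 < (p i).length →
      ∃ pl pr : List I, LongestLyndonSuffix (p i) pr ∧ p i = pl ++ pr ∧
        s (i + 1) = pr ++ s i ∧ p (i + 1) = pl)
    (r : List I) (hr : LongestLyndonSuffix ℓ r)
    (j : ℕ) (hjrange : ∀ i < j, 1 < (p i).length) (hj : s j = r) :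
    ∀ i ≤ j, IsLyndon (s i) := by
  have hinv : ∀ i, i ≤ j → p i ++ s i = ℓ ∧ s i ≠ [] := by
    intro i
    induction i with
    | zero => exact fun _ => ⟨by rw [hp0, hs0, hsplit], by rw [hs0]; exact h2.1⟩
    | succ i ih =>
      intro hij
      obtain ⟨pl, pr, hLLS, hpe, hse, hple⟩ := hstep i (hjrange i (by omega))
      obtain ⟨hps, hsne⟩ := ih (Nat.le_of_succ_le hij)
      refine ⟨?_, ?_⟩
      · rw [hple, hse, ← List.append_assoc, ← hpe, hps]
      · rw [hse]
        exact fun h => hsne (List.append_eq_nil_iff.mp h).2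
  have hstepmono : ∀ k, k < j → (s k).length < (s (k + 1)).length := by
    intro k hk
    obtain ⟨pl, pr, hLLS, hpe, hse, hple⟩ := hstep k (hjrange k hk)
    rw [hse, List.length_append]
    have h0 : pr ≠ [] := hLLS.2.2.1.1
    have := List.length_pos_iff.mpr h0
    omega
  have hmono : ∀ d i, i + d ≤ j → (s i).length ≤ (s (i + d)).length := by
    intro d
    induction d with
    | zero => exact fun i _ => le_rfl
    | succ d ih =>
      intro i hij
      have ha := ih i (by omega)
      have hb := hstepmono (i + d) (by omega)
      exact le_trans ha (le_of_lt hb)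
  intro i
  induction i with
  | zero => exact fun _ => by rw [hs0]; exact h2
  | succ i ih =>
    intro hij
    have hi : i ≤ j := Nat.le_of_succ_le hij
    obtain ⟨pl, pr, hLLS, hpe, hse, hple⟩ := hstep i (hjrange i (by omega))
    obtain ⟨hps, hsne⟩ := hinv i hi
    have hlen : pr.length + (s i).length ≤ r.length := by
      have ha := hmono (j - (i + 1)) (i + 1) (by omega)
      rw [show i + 1 + (j - (i + 1)) = j from by omega, hj, hse, List.length_append] at ha
      exact ha
    have hkey : pr < s i := keyA hps.symm hsne hLLS hr hlen
    rw [hse]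
    exact isLyndon_append hLLS.2.2.1 (ih hi) hkey
end

section
/- Let ℓ = ℓ1 ℓ2 be a factorization of a Lyndon word ℓ with ℓ1 and ℓ2 both Lyndon. Define u_1 = ℓ1, v_1 = ℓ2, and, as long as |v_i| > 1, set u_{i+1} = u_i v_i^{ls} and v_{i+1} = v_i^{rs} (standard factorizations of v_i). Let n be the smallest index such that either v_n^{ls} ≤ u_n or |v_n| = 1. Then the longest proper Lyndon prefix ℓ^{ls} of ℓ equals u_n. -/
/- Words over a linearly ordered alphabet `I` are lists, compared by the
lexicographic order of Lean's `LinearOrder (List I)` instance, in which a word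
is smaller than any word of which it is a proper prefix. -/

variable {I : Type*} [LinearOrder I]

section Aux
set_option linter.unusedSectionVars false

theorem lex_of_lt {a b : List I} (h : a < b) : List.Lex (· < ·) a b := h
theorem lt_of_lex {a b : List I} (h : List.Lex (· < ·) a b) : a < b := h

theorem not_lex_append_self (p t : List I) : ¬ List.Lex (· < ·) (p ++ t) p := by
  induction p with
  | nil => intro h; cases h
  | cons a ps ih =>
    intro h
    cases h with
    | rel h' => exact lt_irrefl _ h'
    | cons h' => exact ih h'

theorem prefix_le {p l : List I} (h : p <+: l) : p ≤ l := by
  obtain ⟨t, rfl⟩ := h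
  exact not_lt.mp (not_lex_append_self p t)

theorem fd_lt {x y : I} (h : x < y) (c s₁ s₂ : List I) :
    c ++ x :: s₁ < c ++ y :: s₂ :=
  lt_of_lex (List.Lex.append_left _ (List.Lex.rel h) c)

theorem append_lt_append_left' : ∀ (c : List I) {a b : List I}, c ++ a < c ++ b → a < b
  | [], _, _, h => h
  | _ :: cs, a, b, h => by
    cases lex_of_lt h with
    | rel h' => exact absurd h' (lt_irrefl _)
    | cons h' => exact append_lt_append_left' cs (lt_of_lex h')

theorem append_lt_append_iff (c : List I) {a b : List I} : c ++ a < c ++ b ↔ a < b :=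
  ⟨append_lt_append_left' c, fun h => lt_of_lex (List.Lex.append_left _ (lex_of_lt h) c)⟩

/-- first-difference decomposition -/
theorem lt_cases {a b : List I} (h : a < b) :
    a <+: b ∨ ∃ (c : List I) (x y : I) (s₁ s₂ : List I),
      x < y ∧ a = c ++ x :: s₁ ∧ b = c ++ y :: s₂ := by
  induction lex_of_lt h with
  | nil => exact Or.inl (List.nil_prefix)
  | @rel x s₁ y s₂ hxy => exact Or.inr ⟨[], x, y, s₁, s₂, hxy, rfl, rfl⟩
  | @cons z s₁ s₂ hlex ih =>
    rcases ih (lt_of_lex hlex) with hp | ⟨c, x, y, t₁, t₂, hxy, rfl, rfl⟩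
    · obtain ⟨t, rfl⟩ := hp
      exact Or.inl ⟨t, rfl⟩
    · exact Or.inr ⟨z :: c, x, y, t₁, t₂, hxy, rfl, rfl⟩

theorem le_cases {a b : List I} (h : a ≤ b) :
    a <+: b ∨ ∃ (c : List I) (x y : I) (s₁ s₂ : List I),
      x < y ∧ a = c ++ x :: s₁ ∧ b = c ++ y :: s₂ := by
  rcases eq_or_lt_of_le h with rfl | h
  · exact Or.inl List.prefix_rfl
  · exact lt_cases h

theorem prefix_length_lt {p l : List I} (h : p <+: l) (hne : p ≠ l) : p.length < l.length :=
  lt_of_le_of_ne h.length_le (fun e => hne (h.eq_of_length e))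

theorem prefix_of_prefix_le {p q l : List I} (hp : p <+: l) (hq : q <+: l)
    (hlen : p.length ≤ q.length) : p <+: q := by
  rcases List.prefix_or_prefix_of_prefix hp hq with h | h
  · exact h
  · have : q.length ≤ p.length := h.length_le
    rw [h.eq_of_length (le_antisymm this hlen)]

theorem exists_min_suffix (q : List I) (h2 : 2 ≤ q.length) :
    ∃ i₀, 0 < i₀ ∧ i₀ < q.length ∧ (∀ j, 0 < j → j < q.length → q.drop i₀ ≤ q.drop j) ∧
      IsLyndon (q.drop i₀) := by
  obtain ⟨i₀, hi₀, hmin⟩ := Finset.exists_min_image (Finset.Ioo 0 q.length)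
    (fun i => q.drop i) ⟨1, by simp; omega⟩
  simp only [Finset.mem_Ioo] at hi₀
  have hmin' : ∀ j, 0 < j → j < q.length → q.drop i₀ ≤ q.drop j := by
    intro j h1 h2'
    exact hmin j (Finset.mem_Ioo.mpr ⟨h1, h2'⟩)
  refine ⟨i₀, hi₀.1, hi₀.2, hmin', ?_, ?_⟩
  · simp only [ne_eq, List.drop_eq_nil_iff]
    omega
  · intro j hj hjl
    rw [List.length_drop] at hjl
    rw [List.drop_drop]
    have hle : q.drop i₀ ≤ q.drop (i₀ + j) := hmin' (i₀ + j) (by omega) (by omega)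
    refine lt_of_le_of_ne hle (fun e => ?_)
    have := congrArg List.length e
    simp only [List.length_drop] at this
    omega

/-- If `v` is Lyndon, `q` a prefix of `v`, and a proper suffix `t` of `q` satisfies `t ≤ q`,
then `t` is a prefix of `q` (a border). -/
theorem border_prefix {v q : List I} (hv : IsLyndon v) (hqv : q <+: v) {i : ℕ}
    (hi0 : 0 < i) (hiq : i < q.length) (hle : q.drop i ≤ q) : q.drop i <+: q := by
  rcases le_cases hle with h | ⟨c, x, y, s₁, s₂, hxy, ht, hq⟩
  · exact h
  · exfalso
    obtain ⟨rr, rfl⟩ := hqv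
    have hiv : i < (q ++ rr).length := by
      rw [List.length_append]; omega
    have h1 : (q ++ rr) < (q ++ rr).drop i := hv.2 i hi0 hiv
    have hdrop : (q ++ rr).drop i = q.drop i ++ rr := List.drop_append_of_le_length (le_of_lt hiq)
    rw [hdrop, ht, hq] at h1
    have h2 : (c ++ x :: s₁) ++ rr < (c ++ y :: s₂) ++ rr := by
      simp only [List.append_assoc, List.cons_append]
      exact fd_lt hxy c (s₁ ++ rr) (s₂ ++ rr)
    rw [hq] at hdrop
    exact absurd (h1.trans h2) (lt_irrefl _)

theorem lyndon_singleton (x : I) : IsLyndon [x] := by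
  constructor
  · simp
  · intro i h1 h2
    simp at h2
    omega

theorem lyndon_append {u w : List I} (hu : IsLyndon u) (hw : IsLyndon w) (huw : u < w) :
    IsLyndon (u ++ w) := by
  have hul : 0 < u.length := List.length_pos_iff.mpr hu.1
  have hwl : 0 < w.length := List.length_pos_iff.mpr hw.1
  have h0 : u ++ w < w := by
    rcases lt_cases huw with hp | ⟨c, x, y, s₁, s₂, hxy, rfl, rfl⟩
    · obtain ⟨w₂, rfl⟩ := hp
      have hw2 : w₂ ≠ [] := by
        rintro rfl
        rw [List.append_nil] at huw
        exact absurd huw (lt_irrefl _)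
      have hlt : u ++ w₂ < w₂ := by
        have h := hw.2 u.length hul (by simp [List.length_append]; exact List.length_pos_iff.mpr hw2)
        rwa [List.drop_left] at h
      calc u ++ (u ++ w₂) < u ++ w₂ := (append_lt_append_iff u).mpr hlt
        _ = u ++ w₂ := rfl
    · have : (c ++ x :: s₁) ++ (c ++ y :: s₂) = c ++ x :: (s₁ ++ (c ++ y :: s₂)) := by
        simp [List.append_assoc]
      rw [this]
      exact fd_lt hxy c _ s₂
  constructor
  · simp [hu.1]
  · intro i h1 h2
    rw [List.length_append] at h2
    rcases lt_or_ge i u.length with hi | hi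
    · -- drop inside u
      have hdrop : (u ++ w).drop i = u.drop i ++ w := List.drop_append_of_le_length (le_of_lt hi)
      rw [hdrop]
      have husuf : u < u.drop i := hu.2 i h1 hi
      rcases lt_cases husuf with hp | ⟨c, x, y, s₁, s₂, hxy, hu', hd'⟩
      · exfalso
        have := hp.length_le
        rw [List.length_drop] at this
        omega
      · rw [hd']; rw [hu']
        have : (c ++ x :: s₁) ++ w = c ++ x :: (s₁ ++ w) := by simp [List.append_assoc]
        rw [this]
        have : (c ++ y :: s₂) ++ w = c ++ y :: (s₂ ++ w) := by simp [List.append_assoc]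
        rw [this]
        exact fd_lt hxy c _ _
    · -- drop at or beyond u
      have hdrop : (u ++ w).drop i = w.drop (i - u.length) := by
        rw [List.drop_append]
        rw [List.drop_eq_nil_of_le hi, List.nil_append]
      rw [hdrop]
      rcases eq_or_lt_of_le hi with heq | hlt'
      · rw [← heq]
        simpa using h0
      · exact h0.trans (hw.2 (i - u.length) (by omega) (by omega))

theorem exists_llp (w : List I) (h2 : 2 ≤ w.length) : ∃ b, LongestLyndonPrefix w b := by
  classical
  set S : Finset ℕ := (Finset.Ico 1 w.length).filter (fun i => IsLyndon (w.take i)) with hS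
  have h1S : 1 ∈ S := by
    simp only [hS, Finset.mem_filter, Finset.mem_Ico]
    refine ⟨⟨le_refl 1, by omega⟩, ?_⟩
    obtain ⟨x, ws, rfl⟩ : ∃ x ws, w = x :: ws := by
      cases w with
      | nil => simp at h2
      | cons x ws => exact ⟨x, ws, rfl⟩
    simpa using lyndon_singleton x
  obtain ⟨m, hmS, hmax⟩ := S.exists_max_image id ⟨1, h1S⟩
  simp only [hS, Finset.mem_filter, Finset.mem_Ico] at hmS
  refine ⟨w.take m, List.take_prefix m w, ?_, hmS.2, ?_⟩
  · rw [List.length_take]; omega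
  · intro p' hp' hlen hpL
    have hne : p' ≠ [] := hpL.1
    have hp'take : p' = w.take p'.length := List.prefix_iff_eq_take.mp hp'
    have hmem : p'.length ∈ S := by
      simp only [hS, Finset.mem_filter, Finset.mem_Ico]
      exact ⟨⟨List.length_pos_iff.mpr hne, hlen⟩, hp'take ▸ hpL⟩
    have := hmax p'.length hmem
    simp only [id] at this
    rw [List.length_take]
    omega

theorem exists_std (v : List I) (hv : IsLyndon v) (h2 : 2 ≤ v.length) :
    ∃ P r, v = P ++ r ∧ P ≠ [] ∧ r ≠ [] ∧ IsLyndon P ∧ IsLyndon r ∧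
      (∀ j, 0 < j → j < v.length → r ≤ v.drop j) := by
  obtain ⟨i₀, hi₀0, hi₀l, hmin, hrL⟩ := exists_min_suffix v h2
  have hPlen : (v.take i₀).length = i₀ := by rw [List.length_take]; omega
  refine ⟨v.take i₀, v.drop i₀, (List.take_append_drop i₀ v).symm, ?_, hrL.1, ?_, hrL, hmin⟩
  · intro h
    rw [h] at hPlen
    simp at hPlen
    omega
  · -- P := v.take i₀ is Lyndon
    refine ⟨fun h => by rw [h] at hPlen; simp at hPlen; omega, ?_⟩
    intro i h1 h2'
    rw [hPlen] at h2'
    have hvlt : v < v.drop i := hv.2 i h1 (by omega)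
    rcases lt_cases hvlt with hp | ⟨c, x, y, s₁, s₂, hxy, hv1, hv2⟩
    · exfalso
      have := hp.length_le
      rw [List.length_drop] at this
      omega
    · rcases lt_or_ge c.length (i₀ - i) with hc | hc
      · -- first difference within the P-part
        have hcle : c.length < i₀ := by omega
        have htake1 : v.take i₀ = c ++ x :: s₁.take (i₀ - c.length - 1) := by
          rw [hv1, List.take_append,
            List.take_of_length_le (by omega : c.length ≤ i₀)]
          congr 1
          have : i₀ - c.length = (i₀ - c.length - 1) + 1 := by omega
          rw [this, List.take_succ_cons]
          simp
        have htake2 : (v.take i₀).drop i = c ++ y :: s₂.take (i₀ - i - c.length - 1) := by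
          rw [List.drop_take, hv2, List.take_append,
            List.take_of_length_le (by omega : c.length ≤ i₀ - i)]
          congr 1
          have : i₀ - i - c.length = (i₀ - i - c.length - 1) + 1 := by omega
          rw [this, List.take_succ_cons]
          simp
        rw [htake2, htake1]
        exact fd_lt hxy c _ _
      · -- common prefix extends past P-part: contradiction with minimality
        exfalso
        have e1 : v.take (i₀ - i) = c.take (i₀ - i) := by
          rw [hv1, List.take_append]
          have : i₀ - i - c.length = 0 := by omega
          rw [this]
          simp
        have e2 : (v.drop i).take (i₀ - i) = c.take (i₀ - i) := by
          rw [hv2, List.take_append]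
          have : i₀ - i - c.length = 0 := by omega
          rw [this]
          simp
        have e3 : (v.drop i).drop (i₀ - i) = v.drop i₀ := by
          rw [List.drop_drop]
          congr 1
          omega
        have hsplit1 : v = c.take (i₀ - i) ++ v.drop (i₀ - i) := by
          conv_lhs => rw [← List.take_append_drop (i₀ - i) v]
          rw [e1]
        have hsplit2 : v.drop i = c.take (i₀ - i) ++ v.drop i₀ := by
          conv_lhs => rw [← List.take_append_drop (i₀ - i) (v.drop i)]
          rw [e2, e3]
        have hlt2 : v.drop (i₀ - i) < v.drop i₀ := by
          apply append_lt_append_left' (c.take (i₀ - i))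
          rw [← hsplit1, ← hsplit2]
          exact hvlt
        have := hmin (i₀ - i) (by omega) (by omega)
        exact absurd hlt2 (not_lt.mpr this)

theorem lemma_E {v a u q : List I} (hv : IsLyndon v) (ha : LongestLyndonPrefix v a)
    (hau : a ≤ u) (hu : u ≠ []) (hq : q ≠ []) (hql : q.length < v.length) (hqv : q <+: v) :
    ¬ IsLyndon (u ++ q) := by
  intro hp
  have hulen : 0 < u.length := List.length_pos_iff.mpr hu
  have hqlen : 0 < q.length := List.length_pos_iff.mpr hq
  have halen : 0 < a.length := List.length_pos_iff.mpr ha.2.2.1.1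
  have hpq : u ++ q < q := by
    have h := hp.2 u.length hulen (by rw [List.length_append]; omega)
    rwa [List.drop_left] at h
  have huq : u < q := lt_of_le_of_lt (prefix_le ⟨q, rfl⟩) hpq
  have haq : a < q := lt_of_le_of_lt hau huq
  have haPq : a <+: q := by
    rcases List.prefix_or_prefix_of_prefix ha.1 hqv with h | h
    · exact h
    · exact absurd haq (not_lt.mpr (prefix_le h))
  have hane : a ≠ q := by rintro rfl; exact absurd haq (lt_irrefl _)
  have halq : a.length < q.length := prefix_length_lt haPq hane
  have hqnotL : ¬ IsLyndon q := fun hL => by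
    have := ha.2.2.2 q hqv hql hL
    omega
  have hqsome : ∃ i, 0 < i ∧ i < q.length ∧ q.drop i ≤ q := by
    by_contra h
    push_neg at h
    exact hqnotL ⟨hq, fun i h1 h2 => h i h1 h2⟩
  obtain ⟨i₁, hi₁0, hi₁l, hi₁le⟩ := hqsome
  obtain ⟨i₀, hi₀0, hi₀l, hmin, htL⟩ := exists_min_suffix q (by omega)
  have ht_le_q : q.drop i₀ ≤ q := (hmin i₁ hi₁0 hi₁l).trans hi₁le
  have htq : q.drop i₀ <+: q := border_prefix hv hqv hi₀0 hi₀l ht_le_q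
  rcases le_or_gt (q.drop i₀).length a.length with hlen | hlen
  · -- t is a prefix of a, so t ≤ a ≤ u ≤ p, but p < t
    have hta : q.drop i₀ <+: a := prefix_of_prefix_le htq haPq hlen
    have htle : q.drop i₀ ≤ u ++ q :=
      ((prefix_le hta).trans hau).trans (prefix_le ⟨q, rfl⟩)
    have hplt : u ++ q < q.drop i₀ := by
      have h := hp.2 (u.length + i₀) (by omega) (by rw [List.length_append]; omega)
      rwa [List.drop_length_add_append] at h
    exact absurd (lt_of_le_of_lt htle hplt) (lt_irrefl _)
  · -- t is a longer Lyndon proper prefix of v than a: contradiction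
    have htv : q.drop i₀ <+: v := htq.trans hqv
    have htlen : (q.drop i₀).length < v.length := by
      rw [List.length_drop]; omega
    have := ha.2.2.2 (q.drop i₀) htv htlen htL
    omega

theorem Kthm : ∀ (N : ℕ) (w : List I), w.length ≤ N → IsLyndon w →
    ∀ (v a P : List I), LongestLyndonPrefix v a → v = P ++ w → IsLyndon P →
      P ≠ [] → P.length < a.length → IsLyndon (v.drop a.length) := by
  intro N
  induction N with
  | zero =>
    intro w hwN _ v a P ha hsplit _ _ hPa
    exfalso
    have hw0 : w.length = 0 := by omega
    have h1 := ha.2.1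
    have h2 := ha.1.length_le
    rw [hsplit, List.length_append] at h1
    omega
  | succ M ih =>
    intro w hwN hw v a P ha hsplit hPL hPne hPa
    have hav : a <+: v := ha.1
    have halen : a.length < v.length := ha.2.1
    have haL : IsLyndon a := ha.2.2.1
    have hPv : P <+: v := ⟨w, hsplit.symm⟩
    have hPa_pref : P <+: a := prefix_of_prefix_le hPv hav (le_of_lt hPa)
    obtain ⟨x, rfl⟩ := hPa_pref
    have hxne : x ≠ [] := by
      intro h
      rw [h] at hPa
      simp at hPa
    have hxw : x <+: w := by
      have := hav
      rw [hsplit] at this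
      exact (List.prefix_append_right_inj P).mp this
    have hxlen : x.length < w.length := by
      rw [hsplit, List.length_append] at halen
      simp only [List.length_append] at halen
      omega
    have hw2 : 2 ≤ w.length := by
      have : 0 < x.length := List.length_pos_iff.mpr hxne
      omega
    obtain ⟨b, hb⟩ := exists_llp w hw2
    have hbL : IsLyndon b := hb.2.2.1
    have hbne : b ≠ [] := hbL.1
    have hblen : b.length < w.length := hb.2.1
    -- w.drop b.length is Lyndon (the "L2 for w" step)
    have hL2w : IsLyndon (w.drop b.length) := by
      obtain ⟨Pw, rw_, hsplitw, hPwne, hrwne, hPwL, hrwL, _⟩ := exists_std w hw hw2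
      have hPwlen : Pw.length < w.length := by
        rw [hsplitw, List.length_append]
        have : 0 < rw_.length := List.length_pos_iff.mpr hrwne
        omega
      have hPwle : Pw.length ≤ b.length := hb.2.2.2 Pw ⟨rw_, hsplitw.symm⟩ hPwlen hPwL
      rcases eq_or_lt_of_le hPwle with heq | hlt
      · have : Pw = b := (prefix_of_prefix_le ⟨rw_, hsplitw.symm⟩ hb.1 hPwle).eq_of_length heq
        rw [← this, hsplitw, List.drop_left]
        exact hrwL
      · have hrwlen : rw_.length ≤ M := by
          rw [hsplitw, List.length_append] at hwN
          have : 0 < Pw.length := List.length_pos_iff.mpr hPwne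
          omega
        exact ih rw_ hrwlen hrwL w b Pw hb hsplitw hPwL hPwne hlt
    -- trichotomy on |x| vs |b|
    rcases lt_trichotomy x.length b.length with hlt | heq | hgt
    · -- impossible: P ++ b would be a longer Lyndon prefix
      exfalso
      have hPlea : P ≤ P ++ x := prefix_le ⟨x, rfl⟩
      have hax : P ++ x < x := by
        have h := haL.2 P.length (List.length_pos_iff.mpr hPne)
          (by rw [List.length_append] at hPa ⊢; omega)
        rwa [List.drop_left] at h
      have hxb : x ≤ b := prefix_le (prefix_of_prefix_le hxw hb.1 (le_of_lt hlt))
      have hPb : P < b := lt_of_le_of_lt hPlea (lt_of_lt_of_le hax hxb)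
      have hPbL : IsLyndon (P ++ b) := lyndon_append hPL hbL hPb
      have hPbv : P ++ b <+: v := by
        rw [hsplit]
        exact (List.prefix_append_right_inj P).mpr hb.1
      have hPbvlen : (P ++ b).length < v.length := by
        rw [hsplit]
        simp only [List.length_append]
        omega
      have := ha.2.2.2 (P ++ b) hPbv hPbvlen hPbL
      simp only [List.length_append] at this
      omega
    · -- x = b
      have hxb : x = b := (prefix_of_prefix_le hxw hb.1 (le_of_eq heq)).eq_of_length heq
      have : v.drop (P ++ x).length = w.drop x.length := by
        rw [hsplit, List.length_append, List.drop_length_add_append]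
      rw [this, hxb]
      exact hL2w
    · -- |b| < |x| : recurse
      have hnble : ¬ b ≤ P := fun hle =>
        absurd haL (lemma_E hw hb hle hPne hxne hxlen hxw)
      have hPltb : P < b := not_le.mp hnble
      have hP'L : IsLyndon (P ++ b) := lyndon_append hPL hbL hPltb
      obtain ⟨w2, hw2eq⟩ := hb.1
      have hw2drop : w.drop b.length = w2 := by rw [← hw2eq, List.drop_left]
      have hsplit' : v = (P ++ b) ++ w2 := by
        rw [hsplit, ← hw2eq, List.append_assoc]
      have hw2len : w2.length ≤ M := by
        have : 0 < b.length := List.length_pos_iff.mpr hbne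
        have := congrArg List.length hw2eq
        rw [List.length_append] at this
        omega
      have hP'len : (P ++ b).length < (P ++ x).length := by
        simp only [List.length_append]
        omega
      exact ih w2 hw2len (hw2drop ▸ hL2w) v (P ++ x) (P ++ b) ha hsplit' hP'L
        (by simp [hPne]) hP'len

theorem drop_llp_lyndon {v a : List I} (hv : IsLyndon v) (ha : LongestLyndonPrefix v a) :
    IsLyndon (v.drop a.length) := by
  have halen : a.length < v.length := ha.2.1
  have hane : a ≠ [] := ha.2.2.1.1
  have h2 : 2 ≤ v.length := by
    have : 0 < a.length := List.length_pos_iff.mpr hane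
    omega
  obtain ⟨P, r, hsplit, hPne, hrne, hPL, hrL, _⟩ := exists_std v hv h2
  have hPlen : P.length < v.length := by
    rw [hsplit, List.length_append]
    have : 0 < r.length := List.length_pos_iff.mpr hrne
    omega
  have hPle : P.length ≤ a.length := ha.2.2.2 P ⟨r, hsplit.symm⟩ hPlen hPL
  rcases eq_or_lt_of_le hPle with heq | hlt
  · have : P = a := (prefix_of_prefix_le ⟨r, hsplit.symm⟩ ha.1 hPle).eq_of_length heq
    rw [← this, hsplit, List.drop_left]
    exact hrL
  · have hrlen : r.length ≤ r.length := le_rfl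
    exact Kthm r.length r le_rfl hrL v a P ha hsplit hPL hPne hlt

end Aux

/-- For a factorization `ℓ = ℓ1 ℓ2` of a Lyndon word into two Lyndon words, iterating
`u_{i+1} = u_i v_i^{ls}`, `v_{i+1} = v_i^{rs}` (standard factorizations) from
`u_1 = ℓ1`, `v_1 = ℓ2`, with `n` the smallest index such that `v_n^{ls} ≤ u_n` or
`|v_n| = 1`, the longest proper Lyndon prefix `ℓ^{ls}` of `ℓ` equals `u_n`. -/
theorem standard_prefix_eq_seq (ℓ ℓ1 ℓ2 : List I)
    (hℓ : IsLyndon ℓ) (h1 : IsLyndon ℓ1) (h2 : IsLyndon ℓ2) (hsplit : ℓ = ℓ1 ++ ℓ2)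
    (u v : ℕ → List I) (hu1 : u 1 = ℓ1) (hv1 : v 1 = ℓ2)
    (hstep : ∀ i, 1 ≤ i → 1 < (v i).length →
      ∃ vls vrs : List I, LongestLyndonPrefix (v i) vls ∧ v i = vls ++ vrs ∧
        u (i + 1) = u i ++ vls ∧ v (i + 1) = vrs)
    (n : ℕ) (hn1 : 1 ≤ n)
    (hstop : (v n).length = 1 ∨ ∃ w : List I, LongestLyndonPrefix (v n) w ∧ w ≤ u n)
    (hmin : ∀ m, 1 ≤ m → m < n →
      ¬((v m).length = 1 ∨ ∃ w : List I, LongestLyndonPrefix (v m) w ∧ w ≤ u m)) :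
    LongestLyndonPrefix ℓ (u n) := by
  have key : ∀ i, 1 ≤ i → i ≤ n → ℓ = u i ++ v i ∧ IsLyndon (u i) ∧ IsLyndon (v i) := by
    intro i hi
    induction i, hi using Nat.le_induction with
    | base =>
      intro _
      exact ⟨by rw [hu1, hv1, hsplit], hu1 ▸ h1, hv1 ▸ h2⟩
    | succ i hi ih =>
      intro hin
      have hiln : i < n := by omega
      obtain ⟨hsp, huL, hvL⟩ := ih (le_of_lt hiln)
      have hnotstop := hmin i hi hiln
      push_neg at hnotstop
      have hvpos : 0 < (v i).length := List.length_pos_iff.mpr hvL.1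
      have hv2 : 1 < (v i).length := by
        rcases Nat.lt_or_ge 1 (v i).length with h | h
        · exact h
        · exact absurd (by omega) hnotstop.1
      obtain ⟨vls, vrs, hllp, hveq, hueq, hveq'⟩ := hstep i hi hv2
      have hlt : u i < vls := hnotstop.2 vls hllp
      refine ⟨?_, ?_, ?_⟩
      · rw [hueq, hveq', hsp, hveq, List.append_assoc]
      · rw [hueq]
        exact lyndon_append huL hllp.2.2.1 hlt
      · rw [hveq']
        have h := drop_llp_lyndon hvL hllp
        rwa [hveq, List.drop_left] at h
  obtain ⟨hsp, huL, hvL⟩ := key n hn1 le_rfl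
  have hvne : v n ≠ [] := hvL.1
  have hvpos : 0 < (v n).length := List.length_pos_iff.mpr hvne
  refine ⟨⟨v n, hsp.symm⟩, ?_, huL, ?_⟩
  · rw [hsp, List.length_append]
    omega
  · intro p hp hplen hpL
    by_contra hcon
    push_neg at hcon
    have hup : u n <+: p := prefix_of_prefix_le ⟨v n, hsp.symm⟩ hp (le_of_lt hcon)
    obtain ⟨q, rfl⟩ := hup
    have hqne : q ≠ [] := by
      intro h
      rw [h] at hcon
      simp at hcon
    have hqv : q <+: v n := by
      have := hp
      rw [hsp] at this
      exact (List.prefix_append_right_inj (u n)).mp this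
    have hqlen : q.length < (v n).length := by
      rw [hsp] at hplen
      simp only [List.length_append] at hplen
      omega
    rcases hstop with h1' | ⟨w, hw, hwle⟩
    · have : 0 < q.length := List.length_pos_iff.mpr hqne
      omega
    · exact lemma_E hvL hw hwle huL.1 hqne hqlen hqv hpL
end
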